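/- For any real p > 1, any α > 0 and any t₀ > 0, there exists a constant c_p > 0 (depending only on p and α) such that for all t ≥ 0, (1 + α) t^{p-1} − |t − t₀|^{p-2}(t − t₀) ≥ c_p t₀^{p-1}. -/
import Mathlib


/-- For `p > 1`, `α > 0` and `t₀ > 0` there exists `c_p > 0`, depending only
on `p` and `α`, such that `(1+α) t^{p-1} − |t − t₀|^{p-2}(t − t₀) ≥ c_p t₀^{p-1}`
for all `t ≥ 0`. -/
theorem tail_term_lower_bound (p α : ℝ) (hp : 1 < p) (hα : 0 < α) :
    ∃ c > (0 : ℝ), ∀ t₀ : ℝ, 0 < t₀ → ∀ t : ℝ, 0 ≤ t →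
      c * t₀ ^ (p - 1) ≤ (1 + α) * t ^ (p - 1) - |t - t₀| ^ (p - 2) * (t - t₀) := by
  have hp1 : (0:ℝ) ≤ p - 1 := by linarith
  have hhalf : (0:ℝ) < (1/2 : ℝ) ^ (p - 1) := Real.rpow_pos_of_pos (by norm_num) _
  have hhalf1 : ((1/2 : ℝ)) ^ (p - 1) ≤ 1 :=
    Real.rpow_le_one (by norm_num) (by norm_num) hp1
  refine ⟨min α ((1/2 : ℝ) ^ (p - 1)), lt_min hα hhalf, ?_⟩
  intro t₀ ht₀ t ht
  have ht₀' : (0:ℝ) ≤ t₀ ^ (p - 1) := Real.rpow_nonneg ht₀.le _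
  have htp : (0:ℝ) ≤ t ^ (p - 1) := Real.rpow_nonneg ht _
  rcases lt_trichotomy t t₀ with h | h | h
  · -- t < t₀
    have hpos : 0 < t₀ - t := by linarith
    have habs : |t - t₀| = t₀ - t := by rw [abs_of_neg (by linarith)]; ring
    have hterm : |t - t₀| ^ (p - 2) * (t - t₀) = -((t₀ - t) ^ (p - 1)) := by
      rw [habs]
      have h1 : (t₀ - t) ^ (p - 1) = (t₀ - t) ^ (p - 2) * (t₀ - t) := by
        rw [show p - 1 = (p - 2) + 1 by ring, Real.rpow_add_one hpos.ne']
      rw [h1]; ring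
    rw [hterm]
    have hkey : ((1/2 : ℝ)) ^ (p - 1) * t₀ ^ (p - 1) ≤
        t ^ (p - 1) + (t₀ - t) ^ (p - 1) := by
      have heq : ((1/2 : ℝ)) ^ (p - 1) * t₀ ^ (p - 1) = (t₀ / 2) ^ (p - 1) := by
        rw [← Real.mul_rpow (by norm_num) ht₀.le]; ring_nf
      rw [heq]
      rcases le_or_gt (t₀ / 2) t with hc | hc
      · have := Real.rpow_le_rpow (by linarith) hc hp1
        have h2 : (0:ℝ) ≤ (t₀ - t) ^ (p - 1) := Real.rpow_nonneg hpos.le _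
        linarith
      · have h3 : t₀ / 2 ≤ t₀ - t := by linarith
        have := Real.rpow_le_rpow (by linarith) h3 hp1
        linarith
    have hm : min α ((1/2 : ℝ) ^ (p - 1)) ≤ (1/2 : ℝ) ^ (p - 1) := min_le_right _ _
    have h4 : min α ((1/2 : ℝ) ^ (p - 1)) * t₀ ^ (p - 1) ≤
        (1/2 : ℝ) ^ (p - 1) * t₀ ^ (p - 1) := mul_le_mul_of_nonneg_right hm ht₀'
    nlinarith [htp, hα.le]
  · -- t = t₀
    subst h
    simp only [sub_self, mul_zero, sub_zero]
    have hm : min α ((1/2 : ℝ) ^ (p - 1)) ≤ 1 := le_trans (min_le_right _ _) hhalf1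
    nlinarith [hα.le, ht₀']
  · -- t₀ < t
    have hpos : 0 < t - t₀ := by linarith
    have habs : |t - t₀| = t - t₀ := abs_of_pos hpos
    have hterm : |t - t₀| ^ (p - 2) * (t - t₀) = (t - t₀) ^ (p - 1) := by
      rw [habs, show p - 1 = (p - 2) + 1 by ring, Real.rpow_add_one hpos.ne']
    rw [hterm]
    have h1 : (t - t₀) ^ (p - 1) ≤ t ^ (p - 1) :=
      Real.rpow_le_rpow hpos.le (by linarith) hp1
    have h2 : t₀ ^ (p - 1) ≤ t ^ (p - 1) :=
      Real.rpow_le_rpow ht₀.le h.le hp1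
    have hm : min α ((1/2 : ℝ) ^ (p - 1)) ≤ α := min_le_left _ _
    have h4 : min α ((1/2 : ℝ) ^ (p - 1)) * t₀ ^ (p - 1) ≤ α * t₀ ^ (p - 1) :=
      mul_le_mul_of_nonneg_right hm ht₀'
    nlinarith [hα.le]
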